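/- Let K ≥ 1 and let g_1, …, g_K be independent random variables each following the standard Gumbel distribution, i.e. the distribution on ℝ with density f(t) = exp(−(t + exp(−t))) with respect to Lebesgue measure. Then for any μ ∈ ℝ^K and every k ∈ {1, …, K}, P[argmax(g + μ) = k] = softmax_k(μ) = exp(μ_k) / ∑_{l=1}^K exp(μ_l). In particular, for a categorical distribution (p_1, …, p_K) with all p_k > 0, choosing μ_k = log p_k gives P[argmax(g + μ) = k] = p_k. -/

import Mathlib

open MeasureTheory ProbabilityTheory Real Set Filter

lemma sq_le_four_mul_exp (t : ℝ) (ht : 0 ≤ t) : t ^ 2 ≤ 4 * Real.exp t := by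
  have h := Real.add_one_le_exp (t / 2)
  have h2 : Real.exp (t / 2) * Real.exp (t / 2) = Real.exp t := by
    rw [← Real.exp_add]; ring_nf
  nlinarith [Real.exp_pos (t / 2)]

lemma gumbelAux_hasDerivAt (c : ℝ) (hc : c ≠ 0) (x : ℝ) :
    HasDerivAt (fun x => c⁻¹ * Real.exp (-c * Real.exp (-x)))
      (Real.exp (-x) * Real.exp (-c * Real.exp (-x))) x := by
  have h1 : HasDerivAt (fun x : ℝ => Real.exp (-x)) (-Real.exp (-x)) x := by
    simpa [Function.comp_def] using (Real.hasDerivAt_exp (-x)).comp x (hasDerivAt_neg x)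
  have h2 : HasDerivAt (fun x : ℝ => -c * Real.exp (-x)) (-c * -Real.exp (-x)) x :=
    h1.const_mul _
  have h3 := (Real.hasDerivAt_exp _).comp x h2
  have h4 := h3.const_mul c⁻¹
  refine h4.congr_deriv ?_
  rw [show (Real.exp (-c * Real.exp (-x)) * (-c * -Real.exp (-x))) = c * (Real.exp (-x) * Real.exp (-c * Real.exp (-x))) by ring, ← mul_assoc, inv_mul_cancel₀ hc]
  ring

lemma gumbelAux_integrable {c : ℝ} (hc : 0 < c) :
    Integrable (fun x => Real.exp (-x) * Real.exp (-c * Real.exp (-x))) := by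
  have hmeas : AEStronglyMeasurable (fun x => Real.exp (-x) * Real.exp (-c * Real.exp (-x)))
      (volume : Measure ℝ) := by
    apply Continuous.aestronglyMeasurable
    continuity
  rw [← integrableOn_univ, ← Set.Iic_union_Ioi (a := (0 : ℝ))]
  apply IntegrableOn.union
  · -- on Iic 0, bound by (4 / c^2) * exp x
    apply Integrable.mono' ((integrableOn_exp_Iic 0).const_mul (4 / c ^ 2)) hmeas.restrict
    filter_upwards with x
    have hu : 0 < Real.exp (-x) := Real.exp_pos _
    set u := Real.exp (-x) with hudef
    have ht := sq_le_four_mul_exp (c * u) (by positivity)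
    have h4 : (Real.exp (c * u))⁻¹ ≤ 4 / (c ^ 2 * u ^ 2) := by
      rw [← one_div, div_le_div_iff₀ (Real.exp_pos _) (by positivity)]
      nlinarith [ht]
    have hxeq : Real.exp x = u⁻¹ := by
      rw [hudef, ← Real.exp_neg, neg_neg]
    rw [Real.norm_eq_abs, abs_of_nonneg (by positivity)]
    have : -c * u = -(c * u) := by ring
    rw [this, Real.exp_neg, hxeq]
    calc u * (Real.exp (c * u))⁻¹ ≤ u * (4 / (c ^ 2 * u ^ 2)) :=
          mul_le_mul_of_nonneg_left h4 hu.le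
      _ = 4 / c ^ 2 * u⁻¹ := by field_simp
  · -- on Ioi 0, bound by exp (-x)
    have hexp : IntegrableOn (fun x => Real.exp (-x)) (Ioi (0 : ℝ)) := by
      simpa using exp_neg_integrableOn_Ioi 0 one_pos
    apply Integrable.mono' hexp hmeas.restrict
    filter_upwards with x
    rw [Real.norm_eq_abs, abs_of_nonneg (by positivity)]
    have h1 : Real.exp (-c * Real.exp (-x)) ≤ 1 := by
      apply Real.exp_le_one_iff.mpr
      have := Real.exp_pos (-x)
      nlinarith
    nlinarith [Real.exp_pos (-x), Real.exp_pos (-c * Real.exp (-x))]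

lemma gumbelAux_tendsto_atBot {c : ℝ} (hc : 0 < c) :
    Tendsto (fun x => c⁻¹ * Real.exp (-c * Real.exp (-x))) atBot (nhds 0) := by
  have h1 : Tendsto (fun x : ℝ => Real.exp (-x)) atBot atTop :=
    Real.tendsto_exp_atTop.comp tendsto_neg_atBot_atTop
  have h2 : Tendsto (fun x : ℝ => -c * Real.exp (-x)) atBot atBot := by
    apply Tendsto.const_mul_atTop_of_neg (by linarith) h1
  have h3 : Tendsto (fun x : ℝ => Real.exp (-c * Real.exp (-x))) atBot (nhds 0) :=
    Real.tendsto_exp_atBot.comp h2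
  simpa using h3.const_mul c⁻¹

lemma gumbelAux_tendsto_atTop {c : ℝ} (hc : 0 < c) :
    Tendsto (fun x => c⁻¹ * Real.exp (-c * Real.exp (-x))) atTop (nhds c⁻¹) := by
  have h1 : Tendsto (fun x : ℝ => Real.exp (-x)) atTop (nhds 0) :=
    Real.tendsto_exp_atBot.comp tendsto_neg_atTop_atBot
  have h2 : Tendsto (fun x : ℝ => -c * Real.exp (-x)) atTop (nhds 0) := by
    simpa using h1.const_mul (-c)
  have h3 : Tendsto (fun x : ℝ => Real.exp (-c * Real.exp (-x))) atTop (nhds 1) := by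
    have := (Real.continuous_exp.tendsto 0).comp h2
    simpa [Function.comp_def] using this
  simpa using h3.const_mul c⁻¹

lemma gumbelAux_integral {c : ℝ} (hc : 0 < c) :
    ∫ x, Real.exp (-x) * Real.exp (-c * Real.exp (-x)) = c⁻¹ := by
  have := integral_of_hasDerivAt_of_tendsto (gumbelAux_hasDerivAt c hc.ne')
    (gumbelAux_integrable hc) (gumbelAux_tendsto_atBot hc) (gumbelAux_tendsto_atTop hc)
  simpa using this

lemma gumbelAux_integral_Iic {c : ℝ} (hc : 0 < c) (a : ℝ) :
    ∫ x in Iic a, Real.exp (-x) * Real.exp (-c * Real.exp (-x))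
      = c⁻¹ * Real.exp (-c * Real.exp (-a)) := by
  have := integral_Iic_of_hasDerivAt_of_tendsto'
    (a := a) (f := fun x => c⁻¹ * Real.exp (-c * Real.exp (-x)))
    (fun x _ => gumbelAux_hasDerivAt c hc.ne' x)
    ((gumbelAux_integrable hc).integrableOn) (gumbelAux_tendsto_atBot hc)
  simpa using this

lemma gumbelAux_lintegral {c : ℝ} (hc : 0 < c) :
    ∫⁻ x, ENNReal.ofReal (Real.exp (-x) * Real.exp (-c * Real.exp (-x)))
      = ENNReal.ofReal c⁻¹ := by
  rw [← ofReal_integral_eq_lintegral_ofReal (gumbelAux_integrable hc)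
    (Filter.Eventually.of_forall fun x => by positivity), gumbelAux_integral hc]

/-- The standard Gumbel distribution: the measure on `ℝ` with density
`t ↦ exp(−(t + exp(−t)))` with respect to Lebesgue measure. -/
noncomputable def stdGumbel : Measure ℝ :=
  volume.withDensity fun t => ENNReal.ofReal (Real.exp (-(t + Real.exp (-t))))

lemma stdGumbel_density_eq (t : ℝ) :
    Real.exp (-(t + Real.exp (-t))) = Real.exp (-t) * Real.exp (-1 * Real.exp (-t)) := by
  rw [← Real.exp_add]; ring_nf

instance : IsProbabilityMeasure stdGumbel := by
  constructor
  rw [stdGumbel, withDensity_apply _ MeasurableSet.univ, Measure.restrict_univ]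
  simp_rw [stdGumbel_density_eq]
  rw [gumbelAux_lintegral one_pos]
  simp

lemma stdGumbel_Iio (a : ℝ) :
    stdGumbel (Iio a) = ENNReal.ofReal (Real.exp (-Real.exp (-a))) := by
  rw [stdGumbel, withDensity_apply _ measurableSet_Iio,
    Measure.restrict_congr_set Iio_ae_eq_Iic]
  simp_rw [stdGumbel_density_eq]
  rw [← ofReal_integral_eq_lintegral_ofReal ((gumbelAux_integrable one_pos).integrableOn)
    (Filter.Eventually.of_forall fun x => by positivity), gumbelAux_integral_Iic one_pos a]
  norm_num

/-- The law of `K` independent standard Gumbel random variables. -/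
noncomputable def stdGumbelPi (K : ℕ) : Measure (Fin K → ℝ) :=
  Measure.pi fun _ => stdGumbel

/-- The event `{g : argmax(g + μ) = k}`. -/
def argmaxEvent {K : ℕ} (μ : Fin K → ℝ) (k : Fin K) : Set (Fin K → ℝ) :=
  {g | ∀ j, j ≠ k → g j + μ j < g k + μ k}

/-- **Gumbel-max trick**: for independent standard Gumbel variables `g_1, …, g_K`
and any `μ ∈ ℝ^K`, `P[argmax(g + μ) = k] = softmax_k(μ) = exp(μ_k) / ∑_l exp(μ_l)`.
In particular, for a categorical distribution `(p_1, …, p_K)` with all `p_k > 0`,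
choosing `μ_k = log p_k` gives `P[argmax(g + μ) = k] = p_k`. -/
theorem gumbelMax_prob_eq_softmax (K : ℕ) (hK : 1 ≤ K) (k : Fin K) :
    (∀ μ : Fin K → ℝ,
      stdGumbelPi K (argmaxEvent μ k) =
        ENNReal.ofReal (Real.exp (μ k) / ∑ l, Real.exp (μ l))) ∧
    (∀ p : Fin K → ℝ, (∀ l, 0 < p l) → ∑ l, p l = 1 →
      stdGumbelPi K (argmaxEvent (fun l => Real.log (p l)) k) =
        ENNReal.ofReal (p k)) := by
  obtain ⟨n, rfl⟩ : ∃ n, K = n + 1 := ⟨K - 1, (Nat.succ_pred_eq_of_pos hK).symm⟩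
  have main : ∀ μ : Fin (n + 1) → ℝ,
      stdGumbelPi (n + 1) (argmaxEvent μ k) =
        ENNReal.ofReal (Real.exp (μ k) / ∑ l, Real.exp (μ l)) := by
    intro μ
    set S : ℝ := ∑ j : Fin n, Real.exp (μ (k.succAbove j) - μ k) with hS
    have hS0 : 0 ≤ S := Finset.sum_nonneg fun j _ => (Real.exp_pos _).le
    have hc : (0 : ℝ) < 1 + S := by linarith
    set ν : Measure (Fin n → ℝ) := Measure.pi fun _ => stdGumbel with hν
    have hmp := measurePreserving_piFinSuccAbove (fun _ : Fin (n + 1) => stdGumbel) k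
    set T : Set (ℝ × (Fin n → ℝ)) :=
      {q | ∀ j, q.2 j < q.1 + μ k - μ (k.succAbove j)} with hT
    have hTm : MeasurableSet T := by
      have hTeq : T = ⋂ j, {q : ℝ × (Fin n → ℝ) | q.2 j - q.1 < μ k - μ (k.succAbove j)} := by
        ext q
        simp only [hT, Set.mem_setOf_eq, Set.mem_iInter]
        constructor <;> intro h j <;> have := h j <;> linarith
      rw [hTeq]
      exact MeasurableSet.iInter fun j => measurableSet_lt
        (by fun_prop : Measurable fun q : ℝ × (Fin n → ℝ) => q.2 j - q.1) measurable_const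
    have hpre :
        (MeasurableEquiv.piFinSuccAbove (fun _ : Fin (n + 1) => ℝ) k) ⁻¹' T
          = argmaxEvent μ k := by
      ext g
      have happ : (MeasurableEquiv.piFinSuccAbove (fun _ : Fin (n + 1) => ℝ) k) g
          = (g k, fun j => g (k.succAbove j)) := rfl
      simp only [Set.mem_preimage, happ, hT, Set.mem_setOf_eq, argmaxEvent]
      constructor
      · intro h j hj
        obtain ⟨i, rfl⟩ := Fin.exists_succAbove_eq hj
        have := h i
        linarith
      · intro h j
        have := h _ (Fin.succAbove_ne k j)
        linarith
    have hmeas1 : Measurable fun t : ℝ => ENNReal.ofReal (Real.exp (-(t + Real.exp (-t)))) := by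
      apply Measurable.ennreal_ofReal; fun_prop
    have hmeas2 : Measurable fun x : ℝ => ENNReal.ofReal (Real.exp (-(S * Real.exp (-x)))) := by
      apply Measurable.ennreal_ofReal; fun_prop
    calc stdGumbelPi (n + 1) (argmaxEvent μ k)
        = (stdGumbel.prod ν) T := by
          rw [← hpre, stdGumbelPi]
          exact hmp.measure_preimage hTm.nullMeasurableSet
      _ = ∫⁻ x, ν (Prod.mk x ⁻¹' T) ∂stdGumbel := Measure.prod_apply hTm
      _ = ∫⁻ x, ENNReal.ofReal (Real.exp (-(S * Real.exp (-x)))) ∂stdGumbel := by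
          congr 1
          ext x
          have hsec : Prod.mk x ⁻¹' T
              = Set.pi Set.univ fun j => Iio (x + μ k - μ (k.succAbove j)) := by
            ext y
            simp [hT, Set.mem_pi]
          rw [hsec, hν, Measure.pi_pi]
          simp_rw [stdGumbel_Iio]
          rw [← ENNReal.ofReal_prod_of_nonneg (fun j _ => (Real.exp_pos _).le)]
          congr 1
          rw [← Real.exp_sum]
          congr 1
          rw [hS, Finset.sum_mul, ← Finset.sum_neg_distrib]
          apply Finset.sum_congr rfl
          intro j _
          rw [← Real.exp_add]
          congr 2
          ring
      _ = ∫⁻ x, ENNReal.ofReal (Real.exp (-(x + Real.exp (-x))))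
            * ENNReal.ofReal (Real.exp (-(S * Real.exp (-x)))) ∂volume := by
          rw [stdGumbel, lintegral_withDensity_eq_lintegral_mul _ hmeas1 hmeas2]
          rfl
      _ = ∫⁻ x, ENNReal.ofReal (Real.exp (-x) * Real.exp (-(1 + S) * Real.exp (-x))) ∂volume := by
          congr 1
          ext x
          rw [← ENNReal.ofReal_mul (by positivity), ← Real.exp_add, ← Real.exp_add]
          congr 2
          ring
      _ = ENNReal.ofReal (1 + S)⁻¹ := gumbelAux_lintegral hc
      _ = ENNReal.ofReal (Real.exp (μ k) / ∑ l, Real.exp (μ l)) := by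
          congr 1
          have hsum : ∑ l, Real.exp (μ l)
              = Real.exp (μ k) + ∑ j, Real.exp (μ (k.succAbove j)) :=
            Fin.sum_univ_succAbove _ k
          have hSe : 1 + S = (∑ l, Real.exp (μ l)) / Real.exp (μ k) := by
            rw [hsum, hS]
            simp_rw [Real.exp_sub]
            rw [← Finset.sum_div]
            field_simp
          rw [hSe, inv_div]
  refine ⟨main, fun p hp hsum => ?_⟩
  rw [main]
  congr 1
  simp_rw [Real.exp_log (hp _)]
  rw [hsum, div_one]
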